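/- Let (X_t) be adapted to a filtration (F_t) with E[X_t | F_{t−1}] = μ and ‖X_t‖ ≤ B almost surely, with X̄_{t−1} the running mean of X_1,...,X_{t−1} (X̄_0 arbitrary with ‖X̄_0‖ ≤ B). Let (λ_t) be a predictable [0,1)-valued sequence, θ ∈ S^{d−1}. Then the process N_t(θ) = Π_{i≤t} exp{ (λ_i/(2B))⟨θ, X_i − μ⟩ − (ψ_E(λ_i)/(2B)²)⟨θ, X_i − X̄_{i−1}⟩² } is a nonnegative supermartingale with respect to (F_t). -/

import Mathlib

open MeasureTheory ProbabilityTheory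
open scoped RealInnerProductSpace

/-- `ψ_E(λ) = −λ − log(1−λ)`. -/
noncomputable def psiE (l : ℝ) : ℝ := -l - Real.log (1 - l)

lemma psiE_zero : psiE 0 = 0 := by simp [psiE]

lemma psiE_nonneg {l : ℝ} (h0 : 0 ≤ l) (h1 : l < 1) : 0 ≤ psiE l := by
  have := Real.log_le_sub_one_of_pos (x := 1 - l) (by linarith)
  simp only [psiE]; linarith

lemma psiE_measurable : Measurable psiE :=
  measurable_id.neg.sub (Real.measurable_log.comp (measurable_const.sub measurable_id))

lemma fan_aux {l v : ℝ} (h0 : 0 ≤ l) (h1 : l < 1) (hv : -1 ≤ v) :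
    l * v - psiE l * v ^ 2 ≤ Real.log (1 + l * v) := by
  set h : ℝ → ℝ := fun x => Real.log (1 + x * v) - x * v + psiE x * v ^ 2 with hh
  have hpos : ∀ x ∈ Set.Icc (0:ℝ) l, 0 < 1 + x * v := by
    intro x hx
    rcases hx with ⟨hx0, hxl⟩
    nlinarith
  have hcont : ContinuousOn h (Set.Icc 0 l) := by
    apply ContinuousOn.add
    · apply ContinuousOn.sub
      · exact ContinuousOn.log (by fun_prop) (fun x hx => ne_of_gt (hpos x hx))
      · fun_prop
    · apply ContinuousOn.mul _ continuousOn_const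
      have : ContinuousOn (fun x : ℝ => -x - Real.log (1 - x)) (Set.Icc 0 l) := by
        apply ContinuousOn.sub (by fun_prop)
        apply ContinuousOn.log (by fun_prop)
        intro x hx
        have h2 := hx.2
        have : x < 1 := lt_of_le_of_lt h2 h1
        intro hc
        linarith [hc]
      exact this
  have hderiv : ∀ x ∈ interior (Set.Icc (0:ℝ) l), HasDerivAt h
      (x ^ 2 * v ^ 2 * (1 + v) / ((1 - x) * (1 + x * v))) x := by
    rw [interior_Icc]
    intro x hx
    have hx0 : 0 < x := hx.1
    have hxl : x < l := hx.2
    have h1x : (0:ℝ) < 1 - x := by linarith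
    have hxv : 0 < 1 + x * v := hpos x ⟨le_of_lt hx0, le_of_lt hxl⟩
    have d1 : HasDerivAt (fun x : ℝ => 1 + x * v) v x := by
      simpa using ((hasDerivAt_id' x).mul_const v).const_add (1:ℝ)
    have d2 : HasDerivAt (fun x : ℝ => Real.log (1 + x * v)) (v / (1 + x * v)) x :=
      d1.log (ne_of_gt hxv)
    have d3 : HasDerivAt (fun x : ℝ => 1 - x) (-1) x := by
      simpa using (hasDerivAt_id' x).const_sub (1:ℝ)
    have d4 : HasDerivAt (fun x : ℝ => Real.log (1 - x)) (-1 / (1 - x)) x :=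
      d3.log (ne_of_gt h1x)
    have d5 : HasDerivAt psiE (-1 - (-1 / (1 - x))) x := by
      have hps : psiE = fun x => -x - Real.log (1 - x) := rfl
      rw [hps]; exact (hasDerivAt_id' x).neg.sub d4
    have d6 : HasDerivAt h (v / (1 + x * v) - 1 * v + (-1 - (-1 / (1 - x))) * v ^ 2) x := by
      exact (d2.sub ((hasDerivAt_id x).mul_const v)).add (d5.mul_const (v ^ 2))
    convert d6 using 1
    field_simp
    ring
  have hmono : MonotoneOn h (Set.Icc 0 l) := by
    apply monotoneOn_of_deriv_nonneg (convex_Icc 0 l) hcont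
    · intro x hx
      exact (hderiv x hx).differentiableAt.differentiableWithinAt
    · intro x hx
      rw [(hderiv x hx).deriv]
      rw [interior_Icc] at hx
      have hx0 : 0 < x := hx.1
      have hxl : x < l := hx.2
      have h1x : (0:ℝ) < 1 - x := by linarith
      have hxv : 0 < 1 + x * v := hpos x ⟨le_of_lt hx0, hxl.le⟩
      have h1v : 0 ≤ 1 + v := by linarith
      positivity
  have := hmono (Set.left_mem_Icc.2 h0) (Set.right_mem_Icc.2 h0) h0
  simp only [hh, psiE_zero] at this
  simp only [zero_mul, mul_zero, Real.log_one, sub_zero, add_zero, zero_add] at this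
  linarith

lemma fan {l v : ℝ} (h0 : 0 ≤ l) (h1 : l < 1) (hv : -1 ≤ v) :
    Real.exp (l * v - psiE l * v ^ 2) ≤ 1 + l * v := by
  have hpos : 0 < 1 + l * v := by nlinarith
  calc Real.exp (l * v - psiE l * v ^ 2) ≤ Real.exp (Real.log (1 + l * v)) :=
        Real.exp_le_exp.2 (fan_aux h0 h1 hv)
    _ = 1 + l * v := Real.exp_log hpos

theorem empirical_bernstein_supermartingale {d : ℕ} {Ω : Type*} {m0 : MeasurableSpace Ω}
    (P : Measure Ω) [IsProbabilityMeasure P]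
    (ℱ : Filtration ℕ m0)
    -- `X i` is the (i+1)-st observation, measurable at time i+1
    (X : ℕ → Ω → EuclideanSpace ℝ (Fin d))
    (hadap : ∀ i, StronglyMeasurable[ℱ (i + 1)] (X i))
    (B : ℝ) (hB : 0 < B)
    (hbdd : ∀ i, ∀ᵐ ω ∂P, ‖X i ω‖ ≤ B)
    (μ : EuclideanSpace ℝ (Fin d))
    (hcmean : ∀ i, P[X i | ℱ i] =ᵐ[P] fun _ => μ)
    -- running means: `Xbar 0` is an arbitrary `ℱ 0`-measurable point of norm ≤ B;
    -- `Xbar i` is the sample mean of the first i observations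
    (Xbar : ℕ → Ω → EuclideanSpace ℝ (Fin d))
    (hXbar0meas : StronglyMeasurable[ℱ 0] (Xbar 0))
    (hXbar0 : ∀ ω, ‖Xbar 0 ω‖ ≤ B)
    (hXbar : ∀ i, 1 ≤ i → ∀ ω, Xbar i ω = (i : ℝ)⁻¹ • ∑ j ∈ Finset.range i, X j ω)
    -- predictable [0,1)-valued sequence
    (lam : ℕ → Ω → ℝ)
    (hlammeas : ∀ i, Measurable[ℱ i] (lam i))
    (hlam : ∀ i ω, 0 ≤ lam i ω ∧ lam i ω < 1)
    (θ : EuclideanSpace ℝ (Fin d)) (hθ : ‖θ‖ = 1) :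
    Supermartingale
      (fun t ω => ∏ i ∈ Finset.range t,
        Real.exp (lam i ω / (2 * B) * ⟪θ, X i ω - μ⟫
          - psiE (lam i ω) / (2 * B) ^ 2 * ⟪θ, X i ω - Xbar i ω⟫ ^ 2)) ℱ P ∧
    ∀ t ω, 0 ≤ ∏ i ∈ Finset.range t,
        Real.exp (lam i ω / (2 * B) * ⟪θ, X i ω - μ⟫
          - psiE (lam i ω) / (2 * B) ^ 2 * ⟪θ, X i ω - Xbar i ω⟫ ^ 2) := by
  classical
  have hB2 : (0:ℝ) < 2 * B := by linarith
  set f : ℕ → Ω → ℝ := fun i ω => lam i ω / (2 * B) * ⟪θ, X i ω - μ⟫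
      - psiE (lam i ω) / (2 * B) ^ 2 * ⟪θ, X i ω - Xbar i ω⟫ ^ 2 with hfdef
  set N : ℕ → Ω → ℝ := fun t ω => ∏ i ∈ Finset.range t, Real.exp (f i ω) with hNdef
  show Supermartingale N ℱ P ∧ ∀ t ω, 0 ≤ N t ω
  -- basic helpers
  have hinner : ∀ {m : MeasurableSpace Ω} {g : Ω → EuclideanSpace ℝ (Fin d)},
      StronglyMeasurable[m] g → StronglyMeasurable[m] (fun ω => ⟪θ, g ω⟫) := by
    intro m g hg
    exact (continuous_const.inner continuous_id).comp_stronglyMeasurable hg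
  have habs : ∀ x y : EuclideanSpace ℝ (Fin d), |⟪θ, x - y⟫| ≤ ‖x‖ + ‖y‖ := by
    intro x y
    calc |⟪θ, x - y⟫| ≤ ‖θ‖ * ‖x - y‖ := abs_real_inner_le_norm θ (x - y)
      _ = ‖x - y‖ := by rw [hθ, one_mul]
      _ ≤ ‖x‖ + ‖y‖ := norm_sub_le x y
  have habs1 : ∀ x : EuclideanSpace ℝ (Fin d), |⟪θ, x⟫| ≤ ‖x‖ := by
    intro x
    calc |⟪θ, x⟫| ≤ ‖θ‖ * ‖x‖ := abs_real_inner_le_norm θ x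
      _ = ‖x‖ := by rw [hθ, one_mul]
  -- measurability of Xbar
  have hXbarmeas : ∀ i, StronglyMeasurable[ℱ i] (Xbar i) := by
    intro i
    rcases Nat.eq_zero_or_pos i with h | h
    · subst h; exact hXbar0meas
    · have heq : Xbar i = fun ω => (i : ℝ)⁻¹ • ∑ j ∈ Finset.range i, X j ω :=
        funext fun ω => hXbar i h ω
      rw [heq]
      exact (Finset.stronglyMeasurable_fun_sum _ fun j hj =>
        (hadap j).mono (ℱ.mono (Finset.mem_range.1 hj))).const_smul ((i : ℝ)⁻¹)
  -- measurability of f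
  have hfmeas : ∀ i, StronglyMeasurable[ℱ (i + 1)] (f i) := by
    intro i
    have hlamM : Measurable[ℱ (i + 1)] (lam i) :=
      (hlammeas i).mono (ℱ.mono (Nat.le_succ i)) le_rfl
    have h1 : Measurable[ℱ (i + 1)] (fun ω => ⟪θ, X i ω - μ⟫) :=
      (hinner ((hadap i).sub stronglyMeasurable_const)).measurable
    have h2 : Measurable[ℱ (i + 1)] (fun ω => ⟪θ, X i ω - Xbar i ω⟫) :=
      (hinner ((hadap i).sub ((hXbarmeas i).mono (ℱ.mono (Nat.le_succ i))))).measurable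
    have : Measurable[ℱ (i + 1)] (f i) := by
      simp only [hfdef]
      exact ((hlamM.div_const _).mul h1).sub
        (((psiE_measurable.comp hlamM).div_const _).mul (h2.pow_const 2))
    exact this.stronglyMeasurable
  -- adaptedness of N
  have hNadap : StronglyAdapted ℱ N := by
    intro t
    refine Finset.stronglyMeasurable_fun_prod _ fun i hi => ?_
    exact Real.continuous_exp.comp_stronglyMeasurable
      ((hfmeas i).mono (ℱ.mono (Finset.mem_range.1 hi)))
  -- a.e. bounds
  have hXae : ∀ᵐ ω ∂P, ∀ i, ‖X i ω‖ ≤ B := ae_all_iff.2 hbdd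
  have hXbarB : ∀ ω, (∀ i, ‖X i ω‖ ≤ B) → ∀ i, ‖Xbar i ω‖ ≤ B := by
    intro ω hω i
    rcases Nat.eq_zero_or_pos i with h | h
    · subst h; exact hXbar0 ω
    · rw [hXbar i h ω, norm_smul]
      have hi : (0:ℝ) < i := by exact_mod_cast h
      have hsum : ‖∑ j ∈ Finset.range i, X j ω‖ ≤ (i : ℝ) * B := by
        refine le_trans (norm_sum_le _ _) ?_
        calc ∑ j ∈ Finset.range i, ‖X j ω‖ ≤ ∑ _j ∈ Finset.range i, B :=
              Finset.sum_le_sum fun j _ => hω j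
          _ = (i : ℝ) * B := by simp [Finset.sum_const, Finset.card_range, nsmul_eq_mul]
      calc ‖(i : ℝ)⁻¹‖ * ‖∑ j ∈ Finset.range i, X j ω‖
          = (i : ℝ)⁻¹ * ‖∑ j ∈ Finset.range i, X j ω‖ := by
            rw [Real.norm_eq_abs, abs_of_pos (by positivity)]
        _ ≤ (i : ℝ)⁻¹ * ((i : ℝ) * B) := by
            apply mul_le_mul_of_nonneg_left hsum (by positivity)
        _ = B := by field_simp
  set C0 : ℝ := Real.exp ((B + ‖μ‖) / (2 * B)) with hC0def
  have hC0pos : 0 < C0 := Real.exp_pos _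
  -- pointwise bound on exp (f i ω)
  have hfb : ∀ i ω, (∀ j, ‖X j ω‖ ≤ B) → Real.exp (f i ω) ≤ C0 := by
    intro i ω hω
    apply Real.exp_le_exp.2
    have h1 : f i ω ≤ lam i ω / (2 * B) * ⟪θ, X i ω - μ⟫ := by
      simp only [hfdef]
      have : 0 ≤ psiE (lam i ω) / (2 * B) ^ 2 * ⟪θ, X i ω - Xbar i ω⟫ ^ 2 := by
        apply mul_nonneg (div_nonneg (psiE_nonneg (hlam i ω).1 (hlam i ω).2) (by positivity))
        positivity
      linarith
    refine h1.trans ?_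
    have h2 : |⟪θ, X i ω - μ⟫| ≤ B + ‖μ‖ := (habs _ _).trans (by linarith [hω i])
    have h3 : 0 ≤ lam i ω / (2 * B) := div_nonneg (hlam i ω).1 (by linarith)
    have h4 : lam i ω / (2 * B) ≤ 1 / (2 * B) :=
      (div_le_div_iff_of_pos_right hB2).2 (hlam i ω).2.le
    have hμ0 : (0:ℝ) ≤ B + ‖μ‖ := by positivity
    calc lam i ω / (2 * B) * ⟪θ, X i ω - μ⟫
        ≤ lam i ω / (2 * B) * (B + ‖μ‖) :=
          mul_le_mul_of_nonneg_left ((le_abs_self _).trans h2) h3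
      _ ≤ 1 / (2 * B) * (B + ‖μ‖) := mul_le_mul_of_nonneg_right h4 hμ0
      _ = (B + ‖μ‖) / (2 * B) := by ring
  -- integrability helper
  have hintb : ∀ {g : Ω → ℝ} (C : ℝ), AEStronglyMeasurable g P →
      (∀ᵐ ω ∂P, |g ω| ≤ C) → Integrable g P := by
    intro g C hm hb
    exact Integrable.mono' (integrable_const C) hm (by simpa [Real.norm_eq_abs] using hb)
  -- positivity of N
  have hNpos : ∀ t ω, 0 ≤ N t ω := fun t ω =>
    Finset.prod_nonneg fun i _ => (Real.exp_pos _).le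
  -- integrability of N
  have hNint : ∀ t, Integrable (N t) P := by
    intro t
    refine hintb (C0 ^ t) ((hNadap t).mono (ℱ.le t)).aestronglyMeasurable ?_
    filter_upwards [hXae] with ω hω
    rw [abs_of_nonneg (hNpos t ω)]
    calc N t ω ≤ ∏ _i ∈ Finset.range t, C0 :=
          Finset.prod_le_prod (fun i _ => (Real.exp_pos _).le) (fun i _ => hfb i ω hω)
      _ = C0 ^ t := by simp
  -- the supermartingale step
  have hstep : ∀ t, P[N (t + 1)|ℱ t] ≤ᵐ[P] N t := by
    intro t
    set c : Ω → ℝ := fun ω => lam t ω / (2 * B) with hcdef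
    set e : Ω → ℝ := fun ω => Real.exp (c ω * ⟪θ, Xbar t ω - μ⟫) with hedef
    set A : Ω → ℝ := fun ω => e ω * (1 - c ω * ⟪θ, Xbar t ω⟫) with hAdef
    set D : Ω → ℝ := fun ω => e ω * c ω with hDdef
    set inn : Ω → ℝ := fun ω => ⟪θ, X t ω⟫ with hinndef
    set G : Ω → ℝ := fun ω => A ω + D ω * inn ω with hGdef
    -- pointwise facts for good ω
    have hc0 : ∀ ω, 0 ≤ c ω := fun ω => div_nonneg (hlam t ω).1 hB2.le
    have hc1 : ∀ ω, c ω ≤ 1 / (2 * B) := fun ω => (div_le_div_iff_of_pos_right hB2).2 (hlam t ω).2.le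
    have he0 : ∀ ω, 0 < e ω := fun ω => Real.exp_pos _
    -- e bounded by C0 on good set
    have heb : ∀ ω, (∀ j, ‖X j ω‖ ≤ B) → e ω ≤ C0 := by
      intro ω hω
      apply Real.exp_le_exp.2
      have h2 : |⟪θ, Xbar t ω - μ⟫| ≤ B + ‖μ‖ :=
        (habs _ _).trans (by linarith [hXbarB ω hω t])
      have hμ0 : (0:ℝ) ≤ B + ‖μ‖ := by positivity
      calc c ω * ⟪θ, Xbar t ω - μ⟫ ≤ c ω * (B + ‖μ‖) :=
            mul_le_mul_of_nonneg_left ((le_abs_self _).trans h2) (hc0 ω)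
        _ ≤ 1 / (2 * B) * (B + ‖μ‖) := mul_le_mul_of_nonneg_right (hc1 ω) hμ0
        _ = (B + ‖μ‖) / (2 * B) := by ring
    -- the Fan-based pointwise inequality
    have hptwise : ∀ ω, (∀ j, ‖X j ω‖ ≤ B) → Real.exp (f t ω) ≤ G ω := by
      intro ω hω
      have hab : |⟪θ, X t ω - Xbar t ω⟫| ≤ 2 * B :=
        (habs _ _).trans (by linarith [hω t, hXbarB ω hω t])
      set w : ℝ := ⟪θ, X t ω - Xbar t ω⟫ / (2 * B) with hwdef
      have hw1 : -1 ≤ w := by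
        rw [hwdef, le_div_iff₀ hB2]
        have := (abs_le.1 hab).1
        linarith
      have hfan := fan (hlam t ω).1 (hlam t ω).2 hw1
      have hinner1 : ⟪θ, X t ω - μ⟫ = ⟪θ, X t ω⟫ - ⟪θ, μ⟫ := inner_sub_right _ _ _
      have hinner2 : ⟪θ, X t ω - Xbar t ω⟫ = ⟪θ, X t ω⟫ - ⟪θ, Xbar t ω⟫ :=
        inner_sub_right _ _ _
      have hinner3 : ⟪θ, Xbar t ω - μ⟫ = ⟪θ, Xbar t ω⟫ - ⟪θ, μ⟫ := inner_sub_right _ _ _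
      have hfeq : f t ω = (lam t ω * w - psiE (lam t ω) * w ^ 2)
          + c ω * ⟪θ, Xbar t ω - μ⟫ := by
        simp only [hfdef, hwdef, hcdef, hinner1, hinner2, hinner3]
        field_simp
        ring
      rw [hfeq, Real.exp_add]
      have h5 : Real.exp (lam t ω * w - psiE (lam t ω) * w ^ 2)
          * Real.exp (c ω * ⟪θ, Xbar t ω - μ⟫)
          ≤ (1 + lam t ω * w) * Real.exp (c ω * ⟪θ, Xbar t ω - μ⟫) :=
        mul_le_mul_of_nonneg_right hfan (Real.exp_nonneg _)
      refine h5.trans (le_of_eq ?_)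
      simp only [hGdef, hAdef, hDdef, hedef, hinndef, hwdef, hcdef, hinner2]
      field_simp
      ring
    -- measurability at level ℱ t
    have hcM : Measurable[ℱ t] c := (hlammeas t).div_const _
    have hbM : Measurable[ℱ t] (fun ω => ⟪θ, Xbar t ω⟫) :=
      (hinner (hXbarmeas t)).measurable
    have hbμM : Measurable[ℱ t] (fun ω => ⟪θ, Xbar t ω - μ⟫) :=
      (hinner ((hXbarmeas t).sub stronglyMeasurable_const)).measurable
    have heM : Measurable[ℱ t] e := Real.measurable_exp.comp (hcM.mul hbμM)
    have hASM : StronglyMeasurable[ℱ t] A :=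
      (heM.mul (measurable_const.sub (hcM.mul hbM))).stronglyMeasurable
    have hDSM : StronglyMeasurable[ℱ t] D := (heM.mul hcM).stronglyMeasurable
    -- integrability facts
    have hXtint : Integrable (X t) P := by
      refine Integrable.mono' (integrable_const B)
        ((hadap t).mono (ℱ.le _)).aestronglyMeasurable ?_
      filter_upwards [hbdd t] with ω h using h
    have hinnint : Integrable inn P := by
      refine hintb B (((hinner (hadap t)).mono (ℱ.le _)).aestronglyMeasurable) ?_
      filter_upwards [hbdd t] with ω h using (habs1 _).trans h
    have hexpfSM : AEStronglyMeasurable (fun ω => Real.exp (f t ω)) P :=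
      (Real.continuous_exp.comp_stronglyMeasurable
        ((hfmeas t).mono (ℱ.le _))).aestronglyMeasurable
    have hexpfint : Integrable (fun ω => Real.exp (f t ω)) P := by
      refine hintb C0 hexpfSM ?_
      filter_upwards [hXae] with ω hω
      rw [abs_of_nonneg (Real.exp_nonneg _)]
      exact hfb t ω hω
    have hAbound : ∀ ω, (∀ j, ‖X j ω‖ ≤ B) → |A ω| ≤ 2 * C0 := by
      intro ω hω
      have hb : |⟪θ, Xbar t ω⟫| ≤ B := (habs1 _).trans (hXbarB ω hω t)
      have hcb : |c ω * ⟪θ, Xbar t ω⟫| ≤ 1 := by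
        rw [abs_mul, abs_of_nonneg (hc0 ω)]
        calc c ω * |⟪θ, Xbar t ω⟫| ≤ (1 / (2 * B)) * B := by
              apply mul_le_mul (hc1 ω) hb (abs_nonneg _) (by positivity)
          _ = 1 / 2 := by field_simp; try ring
          _ ≤ 1 := by norm_num
      rw [hAdef]
      simp only
      rw [abs_mul, abs_of_pos (he0 ω)]
      have h1 : |1 - c ω * ⟪θ, Xbar t ω⟫| ≤ 2 := by
        have := abs_le.1 hcb
        rw [abs_le]; constructor <;> linarith
      calc e ω * |1 - c ω * ⟪θ, Xbar t ω⟫| ≤ C0 * 2 :=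
            mul_le_mul (heb ω hω) h1 (abs_nonneg _) hC0pos.le
        _ = 2 * C0 := by ring
    have hAint : Integrable A P := by
      refine hintb (2 * C0) (hASM.mono (ℱ.le t)).aestronglyMeasurable ?_
      filter_upwards [hXae] with ω hω using hAbound ω hω
    have hDXbound : ∀ ω, (∀ j, ‖X j ω‖ ≤ B) → |D ω * inn ω| ≤ C0 := by
      intro ω hω
      have ha : |inn ω| ≤ B := (habs1 _).trans (hω t)
      rw [abs_mul, hDdef]
      simp only
      rw [abs_mul, abs_of_pos (he0 ω), abs_of_nonneg (hc0 ω)]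
      calc e ω * c ω * |inn ω| ≤ C0 * (1 / (2 * B)) * B := by
            apply mul_le_mul _ ha (abs_nonneg _) (by positivity)
            exact mul_le_mul (heb ω hω) (hc1 ω) (hc0 ω) hC0pos.le
        _ = C0 / 2 := by field_simp; try ring
        _ ≤ C0 := by linarith
    have hDXint : Integrable (fun ω => D ω * inn ω) P := by
      refine hintb C0 ?_ ?_
      · exact ((hDSM.mono (ℱ.le t)).mul ((hinner (hadap t)).mono (ℱ.le _))).aestronglyMeasurable
      · filter_upwards [hXae] with ω hω using hDXbound ω hω
    have hGint : Integrable G P := by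
      have : G = fun ω => A ω + D ω * inn ω := rfl
      rw [this]
      exact hAint.add hDXint
    -- conditional expectation of inner product
    have hcondinner : (P[inn|ℱ t]) =ᵐ[P] fun _ => ⟪θ, μ⟫ := by
      refine (ae_eq_condExp_of_forall_setIntegral_eq (ℱ.le t) hinnint ?_ ?_ ?_).symm
      · intro s _ _
        exact (integrable_const _).integrableOn
      · intro s hs _
        rw [setIntegral_const]
        have h1 : ∫ ω in s, inn ω ∂P = ⟪θ, ∫ ω in s, X t ω ∂P⟫ :=
          integral_inner hXtint.integrableOn θ
        rw [h1]
        have h2 : ∫ ω in s, X t ω ∂P = ∫ ω in s, (P[X t|ℱ t]) ω ∂P :=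
          (setIntegral_condExp (ℱ.le t) hXtint hs).symm
        rw [h2, setIntegral_congr_ae ((ℱ.le t) s hs)
          ((hcmean t).mono fun ω h _ => h)]
        rw [setIntegral_const, real_inner_smul_right]
        simp [smul_eq_mul]
      · exact stronglyMeasurable_const.aestronglyMeasurable
    -- conditional expectation of G
    have hcondG : (P[G|ℱ t]) =ᵐ[P] fun ω => A ω + D ω * ⟪θ, μ⟫ := by
      have hGsplit : G = A + D * inn := rfl
      rw [hGsplit]
      refine (condExp_add hAint (by exact hDXint) (ℱ t)).trans ?_
      have h1 : P[A|ℱ t] = A := condExp_of_stronglyMeasurable (ℱ.le t) hASM hAint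
      have h2 : P[D * inn|ℱ t] =ᵐ[P] D * P[inn|ℱ t] :=
        condExp_mul_of_stronglyMeasurable_left hDSM (by exact hDXint) hinnint
      rw [h1]
      filter_upwards [h2, hcondinner] with ω hω2 hωi
      simp only [Pi.add_apply, Pi.mul_apply] at *
      rw [hω2, hωi]
    -- the bound A + D⟪θ,μ⟫ ≤ 1
    have hone : ∀ ω, A ω + D ω * ⟪θ, μ⟫ ≤ 1 := by
      intro ω
      have hinner3 : ⟪θ, Xbar t ω - μ⟫ = ⟪θ, Xbar t ω⟫ - ⟪θ, μ⟫ := inner_sub_right _ _ _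
      have h1 : c ω * (⟪θ, μ⟫ - ⟪θ, Xbar t ω⟫) + 1
          ≤ Real.exp (c ω * (⟪θ, μ⟫ - ⟪θ, Xbar t ω⟫)) := Real.add_one_le_exp _
      have h2 : A ω + D ω * ⟪θ, μ⟫ = e ω * (1 + c ω * (⟪θ, μ⟫ - ⟪θ, Xbar t ω⟫)) := by
        simp only [hAdef, hDdef]
        ring
      rw [h2]
      calc e ω * (1 + c ω * (⟪θ, μ⟫ - ⟪θ, Xbar t ω⟫))
          ≤ e ω * Real.exp (c ω * (⟪θ, μ⟫ - ⟪θ, Xbar t ω⟫)) := by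
            apply mul_le_mul_of_nonneg_left _ (he0 ω).le
            linarith
        _ = 1 := by
            rw [hedef]
            simp only
            rw [← Real.exp_add, hinner3]
            rw [← Real.exp_zero]
            congr 1
            ring
    -- conditional expectation of exp (f t) is ≤ 1
    have hcond1 : (P[fun ω => Real.exp (f t ω)|ℱ t]) ≤ᵐ[P] fun _ => (1:ℝ) := by
      have hle : (fun ω => Real.exp (f t ω)) ≤ᵐ[P] G := by
        filter_upwards [hXae] with ω hω using hptwise ω hω
      have hm := condExp_mono (m := ℱ t) hexpfint hGint hle
      filter_upwards [hm, hcondG] with ω h1 h2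
      rw [h2] at h1
      exact h1.trans (hone ω)
    -- combine
    have hNsucc : N (t + 1) = N t * fun ω => Real.exp (f t ω) :=
      funext fun ω => Finset.prod_range_succ _ _
    rw [hNsucc]
    have hmul : P[N t * fun ω => Real.exp (f t ω)|ℱ t]
        =ᵐ[P] N t * P[fun ω => Real.exp (f t ω)|ℱ t] :=
      condExp_mul_of_stronglyMeasurable_left (hNadap t) (by rw [← hNsucc]; exact hNint (t + 1))
        hexpfint
    filter_upwards [hmul, hcond1] with ω h1 h2
    rw [h1]
    simp only [Pi.mul_apply]
    calc N t ω * (P[fun ω => Real.exp (f t ω)|ℱ t]) ω ≤ N t ω * 1 :=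
          mul_le_mul_of_nonneg_left h2 (hNpos t ω)
      _ = N t ω := mul_one _
  exact ⟨supermartingale_nat hNadap hNint hstep, hNpos⟩
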